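/- For every integer n ≥ 1 and prime p, the rational-function identity ( ∑_{w∈Sym(n)} p^{−ℓ(w)} ∏_{i=1}^{n−1} (p^{i(n−i)−it})^{ν_i(w)} ) / ( ∏_{i=1}^{n} (1 − p^{i(n−i)−it}) ) = 1 / ∏_{i=1}^{n} (1 − p^{i−1−t}) holds, where ℓ is the length function of Sym(n) and ν_i(w)=1 if the simple root α_i lies in w(Φ⁻), else 0. -/

import Mathlib

open Finset

/-- The length (number of inversions) of a permutation of `Fin n`, i.e. the Coxeter length
in the Weyl group `Sym(n)`. -/
def permLength (n : ℕ) (w : Equiv.Perm (Fin n)) : ℕ :=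
  (Finset.univ.filter (fun p : Fin n × Fin n => p.1 < p.2 ∧ w p.2 < w p.1)).card

/-- `ν_i(w) = 1` if the simple root `α_i = e_i − e_{i+1}` (1-based `i`) lies in `w(Φ⁻)`,
equivalently `w⁻¹(i) > w⁻¹(i+1)`, and `ν_i(w) = 0` otherwise. -/
def nu (n : ℕ) (w : Equiv.Perm (Fin n)) (i : ℕ) : ℕ :=
  if h : 1 ≤ i ∧ i + 1 ≤ n then
    (if w.symm ⟨i, by omega⟩ < w.symm ⟨i - 1, by omega⟩ then 1 else 0)
  else 0

namespace Hey

/-- descent indicator of `v` at (1-based) `i`. -/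
def ds (n : ℕ) (v : Equiv.Perm (Fin n)) (i : ℕ) : ℕ :=
  if h : 1 ≤ i ∧ i + 1 ≤ n then
    (if v ⟨i, by omega⟩ < v ⟨i - 1, by omega⟩ then 1 else 0)
  else 0

lemma nu_eq_ds (n : ℕ) (w : Equiv.Perm (Fin n)) (i : ℕ) : nu n w i = ds n w.symm i := rfl

noncomputable def trm (n : ℕ) (p x : ℝ) (v : Equiv.Perm (Fin n)) : ℝ :=
  p⁻¹ ^ (permLength n v) * ∏ i ∈ Icc 1 (n - 1), (p ^ (i * (n - i)) * x ^ i) ^ (ds n v i)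

lemma permLength_symm (n : ℕ) (w : Equiv.Perm (Fin n)) :
    permLength n w.symm = permLength n w := by
  unfold permLength
  apply Finset.card_bij' (fun pr _ => (w.symm pr.2, w.symm pr.1)) (fun pr _ => (w pr.2, w pr.1))
  · intro a ha
    simp only [mem_filter, mem_univ, true_and] at ha ⊢
    exact ⟨ha.2, by simpa using ha.1⟩
  · intro a ha
    simp only [mem_filter, mem_univ, true_and] at ha ⊢
    exact ⟨ha.2, by simpa using ha.1⟩
  · intro a ha; simp
  · intro a ha; simp


section Rot
variable {m : ℕ}

def rho (m : ℕ) : Equiv.Perm (Fin (m + 1)) := (finRotate (m + 1))⁻¹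

lemma rho_apply_eq_iff {a b : Fin (m+1)} : rho m a = b ↔ a = b + 1 := by
  rw [rho, Equiv.Perm.inv_def, Equiv.symm_apply_eq, finRotate_succ_apply]

lemma rho_zero : rho m 0 = Fin.last m := by
  rw [rho_apply_eq_iff, Fin.last_add_one]

lemma rho_val {y : Fin (m+1)} (hy : y ≠ 0) : ((rho m y) : ℕ) = (y : ℕ) - 1 := by
  have h : y = rho m y + 1 := rho_apply_eq_iff.mp rfl
  have hne : rho m y ≠ Fin.last m := by
    intro hl; rw [hl, Fin.last_add_one] at h; exact hy h
  have h2 := Fin.val_add_one (rho m y)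
  rw [if_neg hne] at h2
  have h3 : (y : ℕ) = (rho m y : ℕ) + 1 := by
    rw [← h2]; exact congrArg Fin.val h
  omega

lemma rho_lt_iff {y z : Fin (m+1)} (hy : y ≠ 0) (hz : z ≠ 0) :
    rho m y < rho m z ↔ y < z := by
  have hy' : (y : ℕ) ≠ 0 := fun h => hy (Fin.ext h)
  have hz' : (z : ℕ) ≠ 0 := fun h => hz (Fin.ext h)
  rw [Fin.lt_def, Fin.lt_def, rho_val hy, rho_val hz]
  omega

lemma rho_lt_last {z : Fin (m+1)} (hz : z ≠ 0) : rho m z < Fin.last m := by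
  have hz' : (z : ℕ) ≠ 0 := fun h => hz (Fin.ext h)
  have hzm : (z : ℕ) ≤ m := Nat.lt_succ_iff.mp z.isLt
  rw [Fin.lt_def, rho_val hz, Fin.val_last]
  omega

lemma finRotate_pow_zero (k : ℕ) (hk : k ≤ m) :
    ((finRotate (m+1))^k) (0 : Fin (m+1)) = ⟨k, by omega⟩ := by
  induction k with
  | zero => simp
  | succ k ih =>
    have hk' : k ≤ m := by omega
    rw [pow_succ', Equiv.Perm.mul_apply, ih hk', finRotate_succ_apply]
    have hne : (⟨k, by omega⟩ : Fin (m+1)) ≠ Fin.last m := by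
      intro h; have := congrArg Fin.val h; simp at this; omega
    apply Fin.ext
    rw [Fin.val_add_one, if_neg hne]

lemma rho_pow_last (k : ℕ) (hk : k ≤ m) :
    ((rho m)^k) (Fin.last m) = ⟨m - k, by omega⟩ := by
  induction k with
  | zero => simp [Fin.last]
  | succ k ih =>
    have hk' : k ≤ m := by omega
    rw [pow_succ', Equiv.Perm.mul_apply, ih hk']
    have hne : (⟨m - k, by omega⟩ : Fin (m+1)) ≠ 0 := by
      intro h; have := congrArg Fin.val h; simp at this; omega
    apply Fin.ext
    rw [rho_val hne]
    simp; omega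

end Rot


lemma permLength_rot (m : ℕ) (v : Equiv.Perm (Fin (m+1))) :
    permLength (m+1) (rho m * v) + ((v.symm 0 : Fin (m+1)) : ℕ)
      = permLength (m+1) v + (m - ((v.symm 0 : Fin (m+1)) : ℕ)) := by
  classical
  set q := v.symm 0 with hq
  set S' := univ.filter (fun pr : Fin (m+1) × Fin (m+1) =>
      pr.1 < pr.2 ∧ (rho m * v) pr.2 < (rho m * v) pr.1) with hS'
  set S := univ.filter (fun pr : Fin (m+1) × Fin (m+1) =>
      pr.1 < pr.2 ∧ v pr.2 < v pr.1) with hS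
  set A := univ.filter (fun pr : Fin (m+1) × Fin (m+1) => pr.1 = q ∧ pr.1 < pr.2) with hA
  set B := univ.filter (fun pr : Fin (m+1) × Fin (m+1) => pr.2 = q ∧ pr.1 < pr.2) with hB
  have hvq : v q = 0 := v.apply_symm_apply 0
  have hvz : ∀ a, v a = 0 ↔ a = q := by
    intro a; rw [Equiv.apply_eq_iff_eq_symm_apply]
  have hUnion : S' ∪ B = S ∪ A := by
    ext pr
    simp only [hS', hS, hA, hB, mem_union, mem_filter, mem_univ, true_and]
    simp only [Equiv.Perm.mul_apply]
    by_cases hab : pr.1 < pr.2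
    · simp only [hab, and_true]
      have hne : v pr.1 ≠ v pr.2 := fun h => (ne_of_lt hab) (v.injective h)
      by_cases h1 : pr.1 = q
      · have h10 : v pr.1 = 0 := (hvz _).2 h1
        have h2 : pr.2 ≠ q := fun h => (ne_of_lt hab) (h1.trans h.symm)
        have h20 : v pr.2 ≠ 0 := fun h => h2 ((hvz _).1 h)
        have : rho m (v pr.2) < rho m (v pr.1) := by
          rw [h10, rho_zero]; exact rho_lt_last h20
        tauto
      · by_cases h2 : pr.2 = q
        · have h20 : v pr.2 = 0 := (hvz _).2 h2
          have h10 : v pr.1 ≠ 0 := fun h => h1 ((hvz _).1 h)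
          have : v pr.2 < v pr.1 := by rw [h20]; exact Fin.pos_of_ne_zero h10
          tauto
        · have h10 : v pr.1 ≠ 0 := fun h => h1 ((hvz _).1 h)
          have h20 : v pr.2 ≠ 0 := fun h => h2 ((hvz _).1 h)
          rw [rho_lt_iff h20 h10]; tauto
    · simp [hab]
  have hd1 : Disjoint S' B := by
    rw [Finset.disjoint_left]
    rintro pr h1 h2
    simp only [hS', hB, mem_filter, mem_univ, true_and] at h1 h2
    simp only [Equiv.Perm.mul_apply] at h1 h2
    have h20 : v pr.2 = 0 := (hvz _).2 h2.1
    rw [h20, rho_zero] at h1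
    exact absurd h1.2 (not_lt.mpr (Fin.le_last _))
  have hd2 : Disjoint S A := by
    rw [Finset.disjoint_left]
    rintro pr h1 h2
    simp only [hS, hA, mem_filter, mem_univ, true_and] at h1 h2
    have h10 : v pr.1 = 0 := (hvz _).2 h2.1
    rw [h10] at h1
    exact absurd h1.2 (Fin.not_lt_zero _)
  have hcard : S'.card + B.card = S.card + A.card := by
    rw [← card_union_of_disjoint hd1, ← card_union_of_disjoint hd2, hUnion]
  have hAcard : A.card = m - (q : ℕ) := by
    have himg : A = (Ioi q).image (fun b => (q, b)) := by
      ext pr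
      simp only [hA, mem_filter, mem_univ, true_and, mem_image, mem_Ioi]
      constructor
      · rintro ⟨h1, h2⟩
        exact ⟨pr.2, h1 ▸ h2, Prod.ext h1.symm rfl⟩
      · rintro ⟨b, hb, rfl⟩
        exact ⟨rfl, hb⟩
    rw [himg, card_image_of_injective _ (fun a b h => by simpa using congrArg Prod.snd h),
      Fin.card_Ioi]
    simp
  have hBcard : B.card = (q : ℕ) := by
    have himg : B = (Iio q).image (fun a => (a, q)) := by
      ext pr
      simp only [hB, mem_filter, mem_univ, true_and, mem_image, mem_Iio]
      constructor
      · rintro ⟨h1, h2⟩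
        exact ⟨pr.1, h1 ▸ h2, Prod.ext rfl h1.symm⟩
      · rintro ⟨b, hb, rfl⟩
        exact ⟨rfl, hb⟩
    rw [himg, card_image_of_injective _ (fun a b h => by simpa using congrArg Prod.fst h),
      Fin.card_Iio]
  show S'.card + (q : ℕ) = S.card + (m - (q : ℕ))
  omega


lemma ds_eq (n : ℕ) (v : Equiv.Perm (Fin n)) (i : ℕ) (h1 : 1 ≤ i) (h2 : i + 1 ≤ n) :
    ds n v i = if v ⟨i, by omega⟩ < v ⟨i - 1, by omega⟩ then 1 else 0 := dif_pos ⟨h1, h2⟩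

lemma trm_rot {p x : ℝ} (hp : 0 < p) (hx : 0 < x) (m : ℕ) (v : Equiv.Perm (Fin (m+1)))
    (hql : v.symm 0 ≠ Fin.last m) :
    trm (m+1) p x (rho m * v) = x * trm (m+1) p x v := by
  classical
  set qn := ((v.symm 0 : Fin (m+1)) : ℕ) with hqn
  have hqm : qn < m := by
    have h1 : qn ≤ m := Nat.lt_succ_iff.mp (v.symm 0).isLt
    rcases Nat.lt_or_ge qn m with h | h
    · exact h
    · exfalso; apply hql; apply Fin.ext; simp [hqn] at *; omega
  have hvz : ∀ a : Fin (m+1), v a = 0 ↔ (a : ℕ) = qn := by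
    intro a
    rw [Equiv.apply_eq_iff_eq_symm_apply, Fin.ext_iff]
  set X : ℕ → ℝ := fun i => p ^ (i * (m + 1 - i)) * x ^ i with hX
  have hXpos : ∀ i, 0 < X i := fun i => by rw [hX]; positivity
  -- descent comparisons
  have hds_eq : ∀ i, 1 ≤ i → i ≤ m → i ≠ qn → i ≠ qn + 1 →
      ds (m+1) (rho m * v) i = ds (m+1) v i := by
    intro i h1 h2 hi1 hi2
    rw [ds_eq _ _ _ h1 (by omega), ds_eq _ _ _ h1 (by omega)]
    have ha : v ⟨i, by omega⟩ ≠ 0 := fun h => hi1 (by simpa using (hvz _).1 h)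
    have hb : v ⟨i - 1, by omega⟩ ≠ 0 := fun h => by
      have := (hvz _).1 h; simp at this; omega
    simp only [Equiv.Perm.mul_apply, rho_lt_iff ha hb]
  have hds_b1 : ds (m+1) v (qn + 1) = 0 := by
    rw [ds_eq _ _ _ (by omega) (by omega)]
    have h0 : v ⟨qn + 1 - 1, by omega⟩ = 0 := (hvz _).2 (by simp)
    rw [h0, if_neg (Fin.not_lt_zero _)]
  have hds_b2 : ds (m+1) (rho m * v) (qn + 1) = 1 := by
    rw [ds_eq _ _ _ (by omega) (by omega)]
    have h0 : v ⟨qn + 1 - 1, by omega⟩ = 0 := (hvz _).2 (by simp)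
    have ha : v ⟨qn + 1, by omega⟩ ≠ 0 := fun h => by
      have := (hvz _).1 h; simp at this
    simp only [Equiv.Perm.mul_apply, h0, rho_zero]
    rw [if_pos (rho_lt_last ha)]
  have hds_c1 : 1 ≤ qn → ds (m+1) v qn = 1 := by
    intro hq1
    rw [ds_eq _ _ _ hq1 (by omega)]
    have h0 : v ⟨qn, by omega⟩ = 0 := (hvz _).2 (by simp)
    have hb : v ⟨qn - 1, by omega⟩ ≠ 0 := fun h => by
      have := (hvz _).1 h; simp at this; omega
    rw [h0]
    rw [if_pos (Fin.pos_of_ne_zero hb)]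
  have hds_c2 : 1 ≤ qn → ds (m+1) (rho m * v) qn = 0 := by
    intro hq1
    rw [ds_eq _ _ _ hq1 (by omega)]
    have h0 : v ⟨qn, by omega⟩ = 0 := (hvz _).2 (by simp)
    simp only [Equiv.Perm.mul_apply, h0, rho_zero]
    rw [if_neg (not_lt.mpr (Fin.le_last _))]
  -- the product claim
  set P' := ∏ i ∈ Icc 1 m, X i ^ ds (m+1) (rho m * v) i with hP'
  set P := ∏ i ∈ Icc 1 m, X i ^ ds (m+1) v i with hP
  have C1 : P' * X qn = P * X (qn + 1) := by
    rcases Nat.eq_zero_or_pos qn with hq0 | hq1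
    · rw [hq0] at hds_b1 hds_b2
      have h1m : (1 : ℕ) ∈ Icc 1 m := by simp; omega
      rw [hq0, hP', hP, ← Finset.mul_prod_erase _ _ h1m, ← Finset.mul_prod_erase _ _ h1m]
      have hrest : ∏ i ∈ (Icc 1 m).erase 1, X i ^ ds (m+1) (rho m * v) i
          = ∏ i ∈ (Icc 1 m).erase 1, X i ^ ds (m+1) v i := by
        apply Finset.prod_congr rfl
        intro i hi
        simp only [mem_erase, mem_Icc] at hi
        rw [hds_eq i hi.2.1 hi.2.2 (by omega) (by omega)]
      rw [hrest, hds_b2, hds_b1]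
      have hX0 : X 0 = 1 := by rw [hX]; simp
      rw [hX0]; ring
    · have ha : qn ∈ Icc 1 m := by simp; omega
      have hb : qn + 1 ∈ (Icc 1 m).erase qn := by simp; omega
      rw [hP', hP, ← Finset.mul_prod_erase _ _ ha, ← Finset.mul_prod_erase _ _ ha,
        ← Finset.mul_prod_erase _ _ hb, ← Finset.mul_prod_erase _ _ hb]
      have hrest : ∏ i ∈ ((Icc 1 m).erase qn).erase (qn+1), X i ^ ds (m+1) (rho m * v) i
          = ∏ i ∈ ((Icc 1 m).erase qn).erase (qn+1), X i ^ ds (m+1) v i := by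
        apply Finset.prod_congr rfl
        intro i hi
        simp only [mem_erase, mem_Icc] at hi
        rw [hds_eq i hi.2.2.1 hi.2.2.2 hi.2.1 hi.1]
      rw [hrest, hds_b2, hds_b1, hds_c1 hq1, hds_c2 hq1]
      ring
  -- length claim
  have CL := permLength_rot m v
  rw [← hqn] at CL
  -- assemble
  have hcancel : p⁻¹ ^ qn * X qn ≠ 0 := by
    have := hXpos qn; positivity
  apply mul_right_cancel₀ hcancel
  show p⁻¹ ^ permLength (m+1) (rho m * v) * P' * (p⁻¹ ^ qn * X qn)
      = x * (p⁻¹ ^ permLength (m+1) v * P) * (p⁻¹ ^ qn * X qn)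
  set L' := permLength (m+1) (rho m * v) with hL'
  set L := permLength (m+1) v with hL
  have hLL : L' + qn = L + (m - qn) := CL
  have hpne : p ≠ 0 := ne_of_gt hp
  have key : p⁻¹ ^ (L + (m - qn)) * X (qn+1) = x * p⁻¹ ^ (L + qn) * X qn := by
    have e1 : (qn + 1) * (m + 1 - (qn+1)) = qn * (m - qn) + (m - qn) := by
      have h : m + 1 - (qn+1) = m - qn := by omega
      rw [h]; ring
    have e0 : qn * (m + 1 - qn) = qn * (m - qn) + qn := by
      have h : m + 1 - qn = (m - qn) + 1 := by omega
      rw [h]; ring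
    rw [hX]
    simp only []
    rw [e1, e0, pow_add p (qn*(m-qn)) (m-qn), pow_add p (qn*(m-qn)) qn,
      pow_add p⁻¹ L (m-qn), pow_add p⁻¹ L qn, pow_succ x qn]
    simp only [inv_pow]
    field_simp
  calc p⁻¹ ^ L' * P' * (p⁻¹ ^ qn * X qn)
      = p⁻¹ ^ (L' + qn) * (P' * X qn) := by rw [pow_add]; ring
    _ = p⁻¹ ^ (L + (m - qn)) * (P * X (qn+1)) := by rw [hLL, C1]
    _ = (p⁻¹ ^ (L + (m - qn)) * X (qn+1)) * P := by ring
    _ = (x * p⁻¹ ^ (L + qn) * X qn) * P := by rw [key]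
    _ = x * (p⁻¹ ^ L * P) * (p⁻¹ ^ qn * X qn) := by rw [pow_add]; ring


section Ext
variable {m : ℕ}

def ext (u : Equiv.Perm (Fin m)) : Equiv.Perm (Fin (m+1)) :=
  (finSuccEquivLast.permCongr).symm u.optionCongr

@[simp] lemma ext_castSucc (u : Equiv.Perm (Fin m)) (i : Fin m) :
    ext u (Fin.castSucc i) = Fin.castSucc (u i) := by
  simp [ext, Equiv.permCongr_apply, finSuccEquivLast_castSucc]

@[simp] lemma ext_last (u : Equiv.Perm (Fin m)) : ext u (Fin.last m) = Fin.last m := by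
  simp [ext, Equiv.permCongr_apply, finSuccEquivLast_last]

@[simp] lemma ext_symm_castSucc (u : Equiv.Perm (Fin m)) (j : Fin m) :
    (ext u).symm (Fin.castSucc j) = Fin.castSucc (u.symm j) := by
  rw [Equiv.symm_apply_eq, ext_castSucc, Equiv.apply_symm_apply]

lemma permLength_ext (u : Equiv.Perm (Fin m)) :
    permLength (m+1) (ext u) = permLength m u := by
  classical
  unfold permLength
  rw [show (univ.filter (fun pr : Fin (m+1) × Fin (m+1) =>
      pr.1 < pr.2 ∧ (ext u) pr.2 < (ext u) pr.1))
    = (univ.filter (fun pr : Fin m × Fin m => pr.1 < pr.2 ∧ u pr.2 < u pr.1)).image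
        (fun pr => (Fin.castSucc pr.1, Fin.castSucc pr.2)) from ?_]
  · rw [card_image_of_injective]
    intro a b h
    have h1 := congrArg Prod.fst h
    have h2 := congrArg Prod.snd h
    simp only at h1 h2
    exact Prod.ext (Fin.castSucc_injective _ h1) (Fin.castSucc_injective _ h2)
  · ext pr
    simp only [mem_filter, mem_univ, true_and, mem_image]
    constructor
    · rintro ⟨hlt, hv⟩
      have hb : pr.2 ≠ Fin.last m := by
        intro h; rw [h, ext_last] at hv
        exact absurd hv (not_lt.mpr (Fin.le_last _))
      have ha : pr.1 ≠ Fin.last m := by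
        intro h; rw [h] at hlt
        exact absurd hlt (not_lt.mpr (Fin.le_last _))
      obtain ⟨a', ha'⟩ := (Fin.eq_castSucc_or_eq_last pr.1).resolve_right ha
      obtain ⟨b', hb'⟩ := (Fin.eq_castSucc_or_eq_last pr.2).resolve_right hb
      refine ⟨(a', b'), ⟨?_, ?_⟩, ?_⟩
      · rw [ha', hb', Fin.castSucc_lt_castSucc_iff] at hlt; exact hlt
      · rw [ha', hb', ext_castSucc, ext_castSucc, Fin.castSucc_lt_castSucc_iff] at hv
        exact hv
      · exact Prod.ext ha'.symm hb'.symm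
    · rintro ⟨⟨a', b'⟩, ⟨hlt, hv⟩, rfl⟩
      constructor
      · simpa [Fin.castSucc_lt_castSucc_iff] using hlt
      · simpa [Fin.castSucc_lt_castSucc_iff] using hv

lemma ds_ext_last (u : Equiv.Perm (Fin m)) (hm : 1 ≤ m) :
    ds (m+1) (ext u) m = 0 := by
  rw [ds_eq _ _ _ hm (by omega)]
  have hlast : (⟨m, by omega⟩ : Fin (m+1)) = Fin.last m := rfl
  rw [hlast, ext_last, if_neg (not_lt.mpr (Fin.le_last _))]

lemma ds_ext (u : Equiv.Perm (Fin m)) (i : ℕ) (h1 : 1 ≤ i) (h2 : i + 1 ≤ m) :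
    ds (m+1) (ext u) i = ds m u i := by
  rw [ds_eq _ _ _ h1 (by omega), ds_eq _ _ _ h1 h2]
  have ha : (⟨i, by omega⟩ : Fin (m+1)) = Fin.castSucc ⟨i, by omega⟩ := rfl
  have hb : (⟨i - 1, by omega⟩ : Fin (m+1)) = Fin.castSucc ⟨i - 1, by omega⟩ := rfl
  rw [ha, hb, ext_castSucc, ext_castSucc]
  simp [Fin.castSucc_lt_castSucc_iff]

lemma trm_ext (p x : ℝ) (u : Equiv.Perm (Fin m)) :
    trm (m+1) p x (ext u) = trm m p (p * x) u := by
  unfold trm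
  rw [permLength_ext]
  congr 1
  rcases Nat.eq_zero_or_pos m with hm | hm
  · subst hm
    simp
  · have hsplit : Icc 1 (m + 1 - 1) = Icc 1 m := by simp
    rw [hsplit]
    have hm1 : Icc 1 m = Icc 1 (m - 1) ∪ {m} := by
      ext i; simp [mem_Icc, mem_union]; omega
    have hdisj : Disjoint (Icc 1 (m-1)) ({m} : Finset ℕ) := by
      simp [Finset.disjoint_singleton_right, mem_Icc]; omega
    rw [hm1, Finset.prod_union hdisj]
    rw [Finset.prod_singleton, ds_ext_last u hm, pow_zero, mul_one]
    apply Finset.prod_congr rfl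
    intro i hi
    simp only [mem_Icc] at hi
    rw [ds_ext u i hi.1 (by omega)]
    congr 1
    have hexp : i * (m + 1 - i) = i * (m - i) + i := by
      have h : m + 1 - i = (m - i) + 1 := by omega
      rw [h, Nat.mul_succ]
    rw [hexp, pow_add, mul_pow]
    ring

end Ext


lemma trm_rot_pow {p x : ℝ} (hp : 0 < p) (hx : 0 < x) (m : ℕ) (k : ℕ) (hk : k ≤ m)
    (u : Equiv.Perm (Fin m)) :
    trm (m+1) p x (rho m ^ k * ext u) = x ^ k * trm m p (p * x) u := by
  induction k with
  | zero => simpa using trm_ext p x u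
  | succ k ih =>
    have hk' : k ≤ m := by omega
    have hstep : rho m ^ (k+1) * ext u = rho m * (rho m ^ k * ext u) := by
      rw [pow_succ', mul_assoc]
    have hql : (rho m ^ k * ext u).symm 0 ≠ Fin.last m := by
      have h0 : (rho m ^ k * ext u).symm 0 = (ext u)⁻¹ ((rho m ^ k)⁻¹ 0) := by
        rw [show (rho m ^ k * ext u).symm = (rho m ^ k * ext u)⁻¹ from rfl, mul_inv_rev,
          Equiv.Perm.mul_apply]
      have h1 : (rho m ^ k)⁻¹ (0 : Fin (m+1)) = ⟨k, by omega⟩ := by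
        rw [rho, ← inv_pow, inv_inv]
        exact finRotate_pow_zero k hk'
      have h2 : (⟨k, by omega⟩ : Fin (m+1)) = Fin.castSucc ⟨k, by omega⟩ := rfl
      rw [h0, h1, h2, show (ext u)⁻¹ = (ext u).symm from rfl, ext_symm_castSucc]
      exact ne_of_lt (Fin.castSucc_lt_last _)
    rw [hstep, trm_rot hp hx m _ hql, ih hk', pow_succ]
    ring

lemma decomp_bijective (m : ℕ) :
    Function.Bijective (fun ru : Fin (m+1) × Equiv.Perm (Fin m) =>
      rho m ^ (ru.1 : ℕ) * ext ru.2) := by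
  rw [Fintype.bijective_iff_injective_and_card]
  constructor
  · rintro ⟨r, u⟩ ⟨s, w⟩ h
    simp only at h
    have hlast := congrArg (fun σ : Equiv.Perm (Fin (m+1)) => σ (Fin.last m)) h
    simp only [Equiv.Perm.mul_apply, ext_last] at hlast
    rw [rho_pow_last _ (Nat.lt_succ_iff.mp r.isLt),
      rho_pow_last _ (Nat.lt_succ_iff.mp s.isLt)] at hlast
    have hr := Nat.lt_succ_iff.mp r.isLt
    have hs := Nat.lt_succ_iff.mp s.isLt
    have hrs : r = s := by
      have hv := congrArg Fin.val hlast
      simp only at hv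
      apply Fin.ext; omega
    subst hrs
    have huv : ext u = ext w := mul_left_cancel h
    have huw : u = w := by
      apply Equiv.ext; intro i
      have hcc := congrArg (fun σ : Equiv.Perm (Fin (m+1)) => σ (Fin.castSucc i)) huv
      simp only [ext_castSucc] at hcc
      exact Fin.castSucc_injective _ hcc
    rw [huw]
  · simp [Fintype.card_prod, Fintype.card_perm, Fintype.card_fin, Nat.factorial_succ]

lemma sum_trm (m : ℕ) {p x : ℝ} (hp : 0 < p) (hx : 0 < x) :
    ∑ v : Equiv.Perm (Fin (m+1)), trm (m+1) p x v
      = (∑ j ∈ range (m+1), x ^ j) * ∑ u : Equiv.Perm (Fin m), trm m p (p*x) u := by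
  have hb := Fintype.sum_bijective _ (decomp_bijective m)
    (fun ru : Fin (m+1) × Equiv.Perm (Fin m) =>
        trm (m+1) p x (rho m ^ (ru.1 : ℕ) * ext ru.2))
    (trm (m+1) p x) (fun ru => rfl)
  rw [← hb, Fintype.sum_prod_type]
  have hterm : ∀ r : Fin (m+1), ∀ u : Equiv.Perm (Fin m),
      trm (m+1) p x (rho m ^ (r : ℕ) * ext u) = x ^ (r : ℕ) * trm m p (p*x) u :=
    fun r u => trm_rot_pow hp hx m _ (Nat.lt_succ_iff.mp r.isLt) u
  calc ∑ r : Fin (m+1), ∑ u : Equiv.Perm (Fin m), trm (m+1) p x (rho m ^ (r : ℕ) * ext u)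
      = ∑ r : Fin (m+1), x ^ (r : ℕ) * ∑ u : Equiv.Perm (Fin m), trm m p (p*x) u := by
        apply Finset.sum_congr rfl
        intro r _
        rw [Finset.mul_sum]
        exact Finset.sum_congr rfl (fun u _ => hterm r u)
    _ = (∑ r : Fin (m+1), x ^ (r : ℕ)) * ∑ u : Equiv.Perm (Fin m), trm m p (p*x) u := by
        rw [Finset.sum_mul]
    _ = (∑ j ∈ range (m+1), x ^ j) * ∑ u : Equiv.Perm (Fin m), trm m p (p*x) u := by
        rw [Fin.sum_univ_eq_sum_range (fun j => x ^ j)]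

lemma Fsum_formula : ∀ (n : ℕ) (p x : ℝ), 0 < p → 0 < x →
    (∑ v : Equiv.Perm (Fin n), trm n p x v)
      = ∏ k ∈ Icc 1 (n-1), ∑ j ∈ range (k+1), (p ^ (n-1-k) * x) ^ j := by
  intro n
  induction n with
  | zero =>
    intro p x hp hx
    rw [show (Icc 1 (0-1) : Finset ℕ) = ∅ from rfl]
    rw [Finset.prod_empty]
    rw [Fintype.sum_eq_single (Equiv.refl (Fin 0)) (fun w h => absurd (Subsingleton.elim _ _) h)]
    simp [trm, permLength]
  | succ m ih =>
    intro p x hp hx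
    rw [sum_trm m hp hx, ih p (p*x) hp (by positivity)]
    rcases Nat.eq_zero_or_pos m with hm | hm
    · subst hm
      simp
    · have hdisj : Disjoint (Icc 1 (m-1)) ({m} : Finset ℕ) := by
        simp [Finset.disjoint_singleton_right, mem_Icc]; omega
      have hsplit : (Icc 1 (m+1-1) : Finset ℕ) = Icc 1 (m-1) ∪ {m} := by
        ext i; simp [mem_Icc, mem_union]; omega
      rw [hsplit, Finset.prod_union hdisj, Finset.prod_singleton]
      have hfm : (∑ j ∈ range (m+1), (p ^ (m+1-1-m) * x) ^ j) = ∑ j ∈ range (m+1), x ^ j := by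
        apply Finset.sum_congr rfl
        intro j _
        have h0 : m + 1 - 1 - m = 0 := by omega
        rw [h0, pow_zero, one_mul]
      rw [hfm]
      have hrest : ∏ k ∈ Icc 1 (m-1), (∑ j ∈ range (k+1), (p ^ (m-1-k) * (p*x)) ^ j)
          = ∏ k ∈ Icc 1 (m-1), (∑ j ∈ range (k+1), (p ^ (m+1-1-k) * x) ^ j) := by
        apply Finset.prod_congr rfl
        intro k hk
        simp only [mem_Icc] at hk
        have hbase : p ^ (m-1-k) * (p*x) = p ^ (m+1-1-k) * x := by
          have hh : m + 1 - 1 - k = (m-1-k) + 1 := by omega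
          rw [hh, pow_succ]; ring
        rw [hbase]
      rw [hrest]
      ring


lemma telescope (m : ℕ) (p x : ℝ) :
    (∏ i ∈ Icc 1 (m+1), (1 - p ^ (i-1) * x))
      * (∏ k ∈ Icc 1 (m+1-1), ∑ j ∈ range (k+1), (p ^ (m+1-1-k) * x) ^ j)
    = ∏ i ∈ Icc 1 (m+1), (1 - p ^ (i*(m+1-i)) * x ^ i) := by
  have hIcc : ∀ f : ℕ → ℝ, ∏ i ∈ Icc 1 (m+1), f i = ∏ j ∈ range (m+1), f (j+1) := by
    intro f
    rw [← Finset.Ico_add_one_right_eq_Icc, Finset.prod_Ico_eq_prod_range]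
    apply Finset.prod_congr (by norm_num)
    intro j _; rw [add_comm]
  have hIccm : ∀ f : ℕ → ℝ, ∏ k ∈ Icc 1 (m+1-1), f k = ∏ j ∈ range m, f (j+1) := by
    intro f
    rw [show m + 1 - 1 = m from rfl, ← Finset.Ico_add_one_right_eq_Icc, Finset.prod_Ico_eq_prod_range]
    apply Finset.prod_congr (by norm_num)
    intro j _; rw [add_comm]
  rw [hIcc (fun i => 1 - p ^ (i-1) * x), hIcc (fun i => 1 - p ^ (i*(m+1-i)) * x ^ i),
    hIccm (fun k => ∑ j ∈ range (k+1), (p ^ (m+1-1-k) * x) ^ j)]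
  simp only [Nat.add_sub_cancel]
  -- LHS first product: ∏ j ∈ range (m+1), (1 - p^j * x)
  rw [Finset.prod_range_succ (fun j => 1 - p ^ j * x)]
  have hrefl : (∏ j ∈ range m, (1 - p ^ j * x)) = ∏ j ∈ range m, (1 - p ^ (m-1-j) * x) :=
    (Finset.prod_range_reflect (fun j => 1 - p ^ j * x) m).symm
  rw [hrefl]
  -- RHS: split off j = 0
  rw [Finset.prod_range_succ' (fun j => 1 - p ^ ((j+1)*(m+1-(j+1))) * x ^ (j+1)) m]
  have hfirst : (1 : ℝ) - p ^ ((0+1)*(m+1-(0+1))) * x ^ (0+1) = 1 - p ^ m * x := by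
    norm_num
  rw [hfirst]
  have hmain : (∏ j ∈ range m, (1 - p ^ (m-1-j) * x))
      * (∏ j ∈ range m, ∑ l ∈ range (j+1+1), (p ^ (m - (j+1)) * x) ^ l)
      = ∏ j ∈ range m, (1 - p ^ ((j+1+1)*(m+1-(j+1+1))) * x ^ (j+1+1)) := by
    rw [← Finset.prod_mul_distrib]
    apply Finset.prod_congr rfl
    intro j hj
    simp only [mem_range] at hj
    have hgeom : (1 - p ^ (m-1-j) * x) * (∑ l ∈ range (j+2), (p ^ (m-(j+1)) * x) ^ l)
        = 1 - (p ^ (m-1-j) * x) ^ (j+2) := by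
      have he : m - (j+1) = m - 1 - j := by omega
      rw [he]
      linear_combination (-1 : ℝ) * geom_sum_mul (p ^ (m-1-j) * x) (j+2)
    rw [hgeom]
    have hpow : (p ^ (m-1-j) * x) ^ (j+2) = p ^ ((j+2)*(m+1-(j+2))) * x ^ (j+2) := by
      rw [mul_pow, ← pow_mul]
      congr 2
      have h1 : m + 1 - (j+2) = m - 1 - j := by omega
      rw [h1, Nat.mul_comm]
    rw [hpow]
  calc (∏ j ∈ range m, (1 - p ^ (m-1-j) * x)) * (1 - p ^ m * x)
        * ∏ j ∈ range m, ∑ l ∈ range (j+1+1), (p ^ (m-(j+1)) * x) ^ l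
      = ((∏ j ∈ range m, (1 - p ^ (m-1-j) * x))
          * ∏ j ∈ range m, ∑ l ∈ range (j+1+1), (p ^ (m-(j+1)) * x) ^ l) * (1 - p ^ m * x) := by
        ring
    _ = (∏ j ∈ range m, (1 - p ^ ((j+1+1)*(m+1-(j+1+1))) * x ^ (j+1+1))) * (1 - p ^ m * x) := by
        rw [hmain]

end Hey

/-- Hey's formula via the `p`-adic Bruhat decomposition: the rational-function identity
`(∑_{w∈Sym(n)} p^{−ℓ(w)} ∏_{i=1}^{n−1} (p^{i(n−i)−it})^{ν_i(w)}) / ∏_{i=1}^{n}(1−p^{i(n−i)−it})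
  = 1 / ∏_{i=1}^{n} (1 − p^{i−1−t})`,
valid at every real `t` where all denominator factors are nonzero. -/
theorem stmt_9 (n : ℕ) (hn : 1 ≤ n) (p : ℕ) (hp : p.Prime) (t : ℝ)
    (hden1 : ∀ i ∈ Finset.Icc 1 n, (1 : ℝ) - (p : ℝ) ^ ((i : ℝ) * ((n : ℝ) - i) - i * t) ≠ 0)
    (hden2 : ∀ i ∈ Finset.Icc 1 n, (1 : ℝ) - (p : ℝ) ^ ((i : ℝ) - 1 - t) ≠ 0) :
    (∑ w : Equiv.Perm (Fin n), (p : ℝ) ^ (-(permLength n w : ℝ)) *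
        ∏ i ∈ Finset.Icc 1 (n - 1),
          ((p : ℝ) ^ ((i : ℝ) * ((n : ℝ) - i) - i * t)) ^ (nu n w i))
      / ∏ i ∈ Finset.Icc 1 n, (1 - (p : ℝ) ^ ((i : ℝ) * ((n : ℝ) - i) - i * t))
    = 1 / ∏ i ∈ Finset.Icc 1 n, (1 - (p : ℝ) ^ ((i : ℝ) - 1 - t)) := by
  have hp1 : (1:ℝ) < (p:ℝ) := by exact_mod_cast hp.one_lt
  have hp0 : (0:ℝ) < (p:ℝ) := lt_trans one_pos hp1
  set x : ℝ := (p:ℝ) ^ (-t) with hxdef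
  have hx0 : 0 < x := Real.rpow_pos_of_pos hp0 _
  have hconv : ∀ i : ℕ, i ≤ n →
      (p:ℝ) ^ ((i:ℝ) * ((n:ℝ) - i) - i * t) = (p:ℝ) ^ (i*(n-i)) * x ^ i := by
    intro i hi
    have h1 : (i:ℝ) * ((n:ℝ) - i) - i * t = ((i*(n-i) : ℕ) : ℝ) + (-t) * (i:ℝ) := by
      push_cast [Nat.cast_sub hi]
      ring
    rw [h1, Real.rpow_add hp0, Real.rpow_natCast]
    congr 1
    rw [Real.rpow_mul (le_of_lt hp0), Real.rpow_natCast]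
  have hconv2 : ∀ i : ℕ, 1 ≤ i → (p:ℝ) ^ ((i:ℝ) - 1 - t) = (p:ℝ) ^ (i-1) * x := by
    intro i hi
    have h1 : (i:ℝ) - 1 - t = (((i-1 : ℕ)) : ℝ) + (-t) := by
      push_cast [Nat.cast_sub hi]; ring
    rw [h1, Real.rpow_add hp0, Real.rpow_natCast, hxdef]
  have hnum : (∑ w : Equiv.Perm (Fin n), (p : ℝ) ^ (-(permLength n w : ℝ)) *
        ∏ i ∈ Finset.Icc 1 (n - 1),
          ((p : ℝ) ^ ((i : ℝ) * ((n : ℝ) - i) - i * t)) ^ (nu n w i))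
      = ∑ v : Equiv.Perm (Fin n), Hey.trm n (p:ℝ) x v := by
    have hsummand : ∀ w : Equiv.Perm (Fin n),
        (p : ℝ) ^ (-(permLength n w : ℝ)) *
          ∏ i ∈ Finset.Icc 1 (n - 1),
            ((p : ℝ) ^ ((i : ℝ) * ((n : ℝ) - i) - i * t)) ^ (nu n w i)
        = Hey.trm n (p:ℝ) x w.symm := by
      intro w
      unfold Hey.trm
      rw [Hey.permLength_symm]
      congr 1
      · rw [Real.rpow_neg (le_of_lt hp0), Real.rpow_natCast, inv_pow]
      · apply Finset.prod_congr rfl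
        intro i hi
        simp only [mem_Icc] at hi
        rw [hconv i (by omega), Hey.nu_eq_ds]
    rw [Finset.sum_congr rfl (fun w _ => hsummand w)]
    exact Fintype.sum_bijective (fun w : Equiv.Perm (Fin n) => w.symm)
      (Function.Involutive.bijective (fun w => Equiv.symm_symm w))
      _ _ (fun w => rfl)
  have hden1' : (∏ i ∈ Finset.Icc 1 n, (1 - (p : ℝ) ^ ((i : ℝ) * ((n : ℝ) - i) - i * t)))
      = ∏ i ∈ Finset.Icc 1 n, (1 - (p:ℝ) ^ (i*(n-i)) * x ^ i) := by
    apply Finset.prod_congr rfl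
    intro i hi
    simp only [mem_Icc] at hi
    rw [hconv i hi.2]
  have hden2' : (∏ i ∈ Finset.Icc 1 n, (1 - (p : ℝ) ^ ((i : ℝ) - 1 - t)))
      = ∏ i ∈ Finset.Icc 1 n, (1 - (p:ℝ) ^ (i-1) * x) := by
    apply Finset.prod_congr rfl
    intro i hi
    simp only [mem_Icc] at hi
    rw [hconv2 i hi.1]
  have hD1 : (∏ i ∈ Finset.Icc 1 n, (1 - (p:ℝ) ^ (i*(n-i)) * x ^ i)) ≠ 0 := by
    rw [← hden1']
    rw [Finset.prod_ne_zero_iff]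
    exact fun i hi => hden1 i hi
  have hD2 : (∏ i ∈ Finset.Icc 1 n, (1 - (p:ℝ) ^ (i-1) * x)) ≠ 0 := by
    rw [← hden2']
    rw [Finset.prod_ne_zero_iff]
    exact fun i hi => hden2 i hi
  rw [hnum, hden1', hden2', Hey.Fsum_formula n (p:ℝ) x hp0 hx0]
  rw [div_eq_div_iff hD1 hD2, one_mul]
  obtain ⟨m, rfl⟩ : ∃ m, n = m + 1 := ⟨n-1, by omega⟩
  have htel := Hey.telescope m (p:ℝ) x
  rw [← htel]
  ring
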